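/- Let A be a T-brace and let a ∈ ζ₂(⋆,A). If a has infinite additive order, then x ⋆ a ∈ ⟨a ⋆ a⟩ and a ⋆ x ∈ ⟨a ⋆ a⟩ for all elements x ∈ A. -/

import Mathlib

/-!
Basic theory of left braces (skew left braces of abelian type), following
Dixon–Kurdachenko–Subbotin, "On the structure of braces whose subideals are ideals".
-/

universe u v

/-- A left brace: an abelian group `(A,+)`, a group `(A,·)`, satisfying
`a(b+c) = ab + ac - a`.  (The additive and multiplicative identities then coincide.) -/
class LeftBrace (A : Type u) extends AddCommGroup A, Group A where
  mul_add_eq : ∀ a b c : A, a * (b + c) = a * b + a * c - a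

namespace LeftBrace

variable {A : Type u} [LeftBrace A]

/-- The star operation `a ⋆ b = ab - a - b`. -/
def bstar (a b : A) : A := a * b - a - b

/-- A subset of a left brace is a subbrace if it is closed under the additive-group
and multiplicative-group operations (equivalently, it is a left brace under the
restricted operations). -/
structure IsSubbrace (S : Set A) : Prop where
  zero_mem : (0 : A) ∈ S
  add_mem : ∀ {a b : A}, a ∈ S → b ∈ S → a + b ∈ S
  neg_mem : ∀ {a : A}, a ∈ S → -a ∈ S
  mul_mem : ∀ {a b : A}, a ∈ S → b ∈ S → a * b ∈ S
  inv_mem : ∀ {a : A}, a ∈ S → a⁻¹ ∈ S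

/-- `I` is an ideal of the subbrace `J`: `I ⊆ J`, both are subbraces, and
`a ⋆ z, z ⋆ a ∈ I` for all `a ∈ J`, `z ∈ I`. -/
structure IsIdealIn (I J : Set A) : Prop where
  subset : I ⊆ J
  subbrace : IsSubbrace I
  ambient_subbrace : IsSubbrace J
  star_mem_left : ∀ a ∈ J, ∀ z ∈ I, bstar a z ∈ I
  star_mem_right : ∀ a ∈ J, ∀ z ∈ I, bstar z a ∈ I

/-- `I` is an ideal of the brace `A`. -/
def IsIdeal (I : Set A) : Prop := IsIdealIn I (Set.univ : Set A)

/-- `A` is a T-brace if being an ideal is a transitive relation: an ideal of an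
ideal of `A` is an ideal of `A`. -/
def IsTBrace (A : Type u) [LeftBrace A] : Prop :=
  ∀ I J : Set A, IsIdealIn I J → IsIdeal J → IsIdeal I

/-- The `⋆`-center `ζ(⋆,A) = {a | a ⋆ x = x ⋆ a = 0 for all x}`. -/
def starCenter (A : Type u) [LeftBrace A] : Set A :=
  {a : A | ∀ x : A, bstar a x = 0 ∧ bstar x a = 0}

/-- The preimage in `A` of the `⋆`-center of the quotient of `A` by (the ideal) `S`:
`a` belongs to it iff `a ⋆ x ∈ S` and `x ⋆ a ∈ S` for every `x ∈ A`. -/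
def nextCenter (A : Type u) [LeftBrace A] (S : Set A) : Set A :=
  {a : A | ∀ x : A, bstar a x ∈ S ∧ bstar x a ∈ S}

/-- The upper `⋆`-central series, indexed by naturals:
`ζ₀(⋆,A) = 0` and `ζ_{n+1}(⋆,A)/ζ_n(⋆,A) = ζ(⋆, A/ζ_n(⋆,A))`. -/
def zetaNat (A : Type u) [LeftBrace A] : ℕ → Set A
  | 0 => ({0} : Set A)
  | n + 1 => nextCenter A (zetaNat A n)

/-- The upper `⋆`-central series, indexed by ordinals (unions at limit ordinals). -/
noncomputable def zetaOrd (A : Type u) [LeftBrace A] (o : Ordinal.{v}) : Set A :=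
  Ordinal.limitRecOn o (({0} : Set A))
    (fun _ ih => nextCenter A ih)
    (fun o _ ih => ⋃ (o' : Ordinal) (h : o' < o), ih o' h)

/-- The upper `⋆`-hypercenter `ζ_∞(⋆,A)`: the final (stable) term of the upper
`⋆`-central series, i.e. the union of all its terms. -/
noncomputable def starHypercenter (A : Type u) [LeftBrace A] : Set A :=
  ⋃ o : Ordinal.{u}, zetaOrd A o

/-- `A` is `⋆`-hypercentral if `A = ζ_γ(⋆,A)` for some ordinal `γ`. -/
def IsStarHypercentral (A : Type u) [LeftBrace A] : Prop :=
  ∃ γ : Ordinal.{u}, zetaOrd A γ = (Set.univ : Set A)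

/-- `K ⋆ L`: the additive subgroup of `(A,+)` generated by all `x ⋆ y`, `x ∈ K`, `y ∈ L`. -/
def setStar (K L : Set A) : AddSubgroup A :=
  AddSubgroup.closure {z : A | ∃ x ∈ K, ∃ y ∈ L, z = bstar x y}

/-- `rightStarSeries A n = A^{(n+1)}`, where `A^{(1)} = A` and `A^{(n+1)} = A^{(n)} ⋆ A`. -/
def rightStarSeries (A : Type u) [LeftBrace A] : ℕ → Set A
  | 0 => (Set.univ : Set A)
  | n + 1 => ((setStar (rightStarSeries A n) (Set.univ : Set A) : AddSubgroup A) : Set A)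

/-- `leftStarSeries A n = A^{n+1}`, where `A^1 = A` and `A^{n+1} = A ⋆ A^n`. -/
def leftStarSeries (A : Type u) [LeftBrace A] : ℕ → Set A
  | 0 => (Set.univ : Set A)
  | n + 1 => ((setStar (Set.univ : Set A) (leftStarSeries A n) : AddSubgroup A) : Set A)

/-- `A` is Smoktunowicz-nilpotent if `A^{(n)} = A^k = 0` for some naturals `n, k`. -/
def IsSmoktunowiczNilpotent (A : Type u) [LeftBrace A] : Prop :=
  ∃ n k : ℕ, rightStarSeries A n = ({0} : Set A) ∧ leftStarSeries A k = ({0} : Set A)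

/-- The subbrace generated by a subset `M`: the intersection of all subbraces containing `M`. -/
def braceClosure (M : Set A) : Set A := ⋂₀ {S : Set A | IsSubbrace S ∧ M ⊆ S}


lemma mul_zero'' (a : A) : a * 0 = a := by
  have h := mul_add_eq a 0 0
  rw [add_zero] at h
  have h2 : a * 0 + a = a * 0 + a * 0 := by
    nth_rewrite 1 [h]; abel
  exact (add_left_cancel h2).symm

lemma one_eq_zero' : (1 : A) = 0 := by
  have h := mul_zero'' (1 : A)
  rw [one_mul] at h
  exact h.symm

lemma zero_mul'' (a : A) : 0 * a = a := by
  rw [← one_eq_zero', one_mul]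

lemma mul_neg'' (a b : A) : a * (-b) = a + a - a * b := by
  have h := mul_add_eq a b (-b)
  rw [add_neg_cancel, mul_zero''] at h
  have h4 : a * b + a * (-b) = a + a := sub_eq_iff_eq_add.mp h.symm
  exact eq_sub_of_add_eq' h4

lemma zero_bstar' (x : A) : bstar 0 x = 0 := by
  simp [bstar, zero_mul'']

lemma bstar_zero' (x : A) : bstar x 0 = 0 := by
  simp [bstar, mul_zero'']

lemma bstar_add' (x b c : A) : bstar x (b + c) = bstar x b + bstar x c := by
  simp only [bstar, mul_add_eq]; abel

def bstarHom (x : A) : A →+ A where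
  toFun y := bstar x y
  map_zero' := bstar_zero' x
  map_add' := bstar_add' x

lemma bstar_zsmul (x : A) (n : ℤ) (y : A) : bstar x (n • y) = n • bstar x y :=
  map_zsmul (bstarHom x) n y

lemma bstar_neg' (x y : A) : bstar x (-y) = - bstar x y :=
  map_neg (bstarHom x) y

lemma mul_eq_bstar (x y : A) : x * y = bstar x y + x + y := by
  simp only [bstar]; abel

lemma mul_bstar (b c x : A) :
    bstar (b * c) x = bstar b (bstar c x) + bstar c x + bstar b x := by
  have e1 : c * x - c - x = (c * x + -c) + -x := by abel
  have h1 : b * (c * x - c - x) = b * (c * x) - b * c - b * x + b + b := by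
    rw [e1, mul_add_eq, mul_add_eq, mul_neg'', mul_neg'']; abel
  simp only [bstar]
  rw [h1, mul_assoc]
  abel

def IsC (u : A) : Prop := ∀ x : A, bstar u x = 0 ∧ bstar x u = 0

lemma IsC.mul_left {u : A} (hu : IsC u) (x : A) : u * x = u + x := by
  rw [mul_eq_bstar, (hu x).1, zero_add]

lemma IsC.mul_right {u : A} (hu : IsC u) (x : A) : x * u = x + u := by
  rw [mul_eq_bstar, (hu x).2, zero_add]

lemma IsC_zero : IsC (0 : A) := fun x => ⟨zero_bstar' x, bstar_zero' x⟩

lemma bstar_add_central_left {u : A} (hu : IsC u) (b x : A) :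
    bstar (b + u) x = bstar b x := by
  rw [← hu.mul_right b, mul_bstar, (hu x).1, bstar_zero', zero_add, zero_add]

lemma bstar_central_right {u : A} (hu : IsC u) (x y : A) :
    bstar x (y + u) = bstar x y := by
  rw [bstar_add', (hu x).2, add_zero]

lemma IsC.add {u v : A} (hu : IsC u) (hv : IsC v) : IsC (u + v) := by
  intro x
  constructor
  · rw [bstar_add_central_left hv u x, (hu x).1]
  · rw [bstar_add', (hu x).2, (hv x).2, add_zero]

lemma IsC.neg {u : A} (hu : IsC u) : IsC (-u) := by
  intro x
  constructor
  · have h := bstar_add_central_left hu (-u) x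
    rw [neg_add_cancel] at h
    rw [← h, zero_bstar']
  · rw [bstar_neg', (hu x).2, neg_zero]

lemma IsC.zsmul {u : A} (hu : IsC u) (n : ℤ) : IsC (n • u) := by
  induction n using Int.induction_on with
  | zero => simpa using IsC_zero
  | succ k ih =>
      rw [add_zsmul, one_zsmul]
      exact ih.add hu
  | pred k ih =>
      rw [sub_zsmul, one_zsmul]
      exact ih.add hu.neg


section ACentral
variable {A : Type u} [LeftBrace A] {a : A}

lemma ainv_bstar (hC : ∀ x : A, IsC (bstar a x) ∧ IsC (bstar x a)) (x : A) :
    bstar a⁻¹ x = -(bstar a x) := by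
  have h := mul_bstar a⁻¹ a x
  rw [inv_mul_cancel, one_eq_zero', zero_bstar'] at h
  rw [((hC x).1 a⁻¹).2, zero_add] at h
  have h2 : bstar a x + bstar a⁻¹ x = 0 := h.symm
  exact eq_neg_of_add_eq_zero_right h2

lemma zpow_bstar (hC : ∀ x : A, IsC (bstar a x) ∧ IsC (bstar x a)) (n : ℤ) (x : A) :
    bstar (a ^ n) x = n • bstar a x := by
  induction n using Int.induction_on with
  | zero => rw [zpow_zero, one_eq_zero', zero_bstar', zero_zsmul]
  | succ k ih =>
      rw [zpow_add_one, mul_bstar, ((hC x).1 (a ^ (k:ℤ))).2, ih, zero_add,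
        add_zsmul, one_zsmul]
      abel
  | pred k ih =>
      rw [show (-(k:ℤ) - 1) = (-(k:ℤ)) - 1 from rfl, zpow_sub_one, mul_bstar,
        ainv_bstar hC x, (((hC x).1.neg) (a ^ (-(k:ℤ)))).2, ih, zero_add,
        sub_zsmul, one_zsmul]
      abel

lemma add_central_mul {u : A} (hu : IsC u) (b y : A) : (b + u) * y = b * y + u := by
  rw [← hu.mul_right b, mul_assoc, hu.mul_left y, mul_add_eq, hu.mul_right b]
  abel

lemma inv_eq_of (hC : ∀ x : A, IsC (bstar a x) ∧ IsC (bstar x a)) :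
    a⁻¹ = -a + bstar a a := by
  have hu : IsC (bstar a a⁻¹) := (hC a⁻¹).1
  have h1 : bstar a a⁻¹ = -a - a⁻¹ := by
    rw [bstar, mul_inv_cancel, one_eq_zero']; abel
  have h2 : a⁻¹ = -a + -(bstar a a⁻¹) := by rw [h1]; abel
  have h3 : bstar a a⁻¹ = - bstar a a := by
    conv_lhs => rw [h2]
    rw [bstar_central_right hu.neg, bstar_neg']
  rw [h2, h3, neg_neg]

lemma zpow_rep (hC : ∀ x : A, IsC (bstar a x) ∧ IsC (bstar x a)) (n : ℤ) :
    ∃ c : ℤ, a ^ n = n • a + c • bstar a a := by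
  have hd : IsC (bstar a a) := (hC a).1
  induction n using Int.induction_on with
  | zero => exact ⟨0, by rw [zpow_zero, one_eq_zero', zero_zsmul, zero_zsmul, add_zero]⟩
  | succ k ih =>
      obtain ⟨c, hc⟩ := ih
      refine ⟨k + c, ?_⟩
      have hshift : (k:ℤ) • a = a ^ (k:ℤ) + (-c) • bstar a a := by
        rw [hc]; module
      rw [zpow_add_one, hc, add_central_mul (hd.zsmul c), mul_eq_bstar,
        hshift, bstar_add_central_left (hd.zsmul (-c)), zpow_bstar hC, hc]
      module
  | pred k ih =>
      obtain ⟨c, hc⟩ := ih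
      refine ⟨k + 1 + c, ?_⟩
      have hshift : (-(k:ℤ)) • a = a ^ (-(k:ℤ)) + (-c) • bstar a a := by
        rw [hc]; module
      rw [show (-(k:ℤ) - 1) = (-(k:ℤ)) - 1 from rfl, zpow_sub_one, hc,
        add_central_mul (hd.zsmul c), mul_eq_bstar, hshift,
        bstar_add_central_left (hd.zsmul (-c)), inv_eq_of hC,
        bstar_central_right hd, bstar_neg', zpow_bstar hC, hc]
      module

lemma smul_rep (hC : ∀ x : A, IsC (bstar a x) ∧ IsC (bstar x a)) (m : ℤ) :
    ∃ c : ℤ, m • a = a ^ m + c • bstar a a := by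
  obtain ⟨c, hc⟩ := zpow_rep hC m
  exact ⟨-c, by rw [hc]; module⟩

lemma bstar_smul_left (hC : ∀ x : A, IsC (bstar a x) ∧ IsC (bstar x a)) (m : ℤ) (x : A) :
    bstar (m • a) x = m • bstar a x := by
  obtain ⟨c, hc⟩ := smul_rep hC m
  rw [hc, bstar_add_central_left (((hC a).1).zsmul c), zpow_bstar hC]

lemma cr1 (hC : ∀ x : A, IsC (bstar a x) ∧ IsC (bstar x a)) (m : ℤ) {u : A} (hu : IsC u)
    (x : A) : bstar (m • a + u) x = m • bstar a x := by
  rw [bstar_add_central_left hu, bstar_smul_left hC]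

lemma cr2 (m : ℤ) {u : A} (hu : IsC u) (x : A) :
    bstar x (m • a + u) = m • bstar x a := by
  rw [bstar_central_right hu, bstar_zsmul]

lemma cr3 (hC : ∀ x : A, IsC (bstar a x) ∧ IsC (bstar x a)) (m : ℤ) {u : A} (hu : IsC u) :
    ∃ k : ℤ, (m • a + u)⁻¹ = (-m) • a + (k • bstar a a - u) := by
  have hd : IsC (bstar a a) := (hC a).1
  obtain ⟨c, hc⟩ := zpow_rep hC m
  obtain ⟨c₂, hc₂⟩ := zpow_rep hC (-m)
  set v : A := u + (-c) • bstar a a with hv_def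
  have hv : IsC v := hu.add (hd.zsmul (-c))
  have hz : m • a + u = a ^ m * v := by
    rw [hv.mul_right, hc, hv_def]; module
  have hvinv : v⁻¹ = -v := by
    apply inv_eq_of_mul_eq_one_right
    rw [hv.mul_left, add_neg_cancel, one_eq_zero']
  refine ⟨c₂ + c, ?_⟩
  rw [hz, mul_inv_rev, hvinv, ← zpow_neg, hv.neg.mul_left, hc₂, hv_def]
  module

end ACentral

def Bset {A : Type u} [LeftBrace A] (a : A) : Set A :=
  {z | ∃ m : ℤ, ∃ u : A, IsC u ∧ z = m • a + u}

def Iset {A : Type u} [LeftBrace A] (a : A) : Set A :=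
  {z | ∃ m n : ℤ, z = m • a + n • bstar a a}

section Ideals
variable {A : Type u} [LeftBrace A] {a : A}

lemma isSubbrace_univ : IsSubbrace (Set.univ : Set A) :=
  ⟨trivial, fun _ _ => trivial, fun _ => trivial, fun _ _ => trivial, fun _ => trivial⟩

lemma mul_rep (hC : ∀ x : A, IsC (bstar a x) ∧ IsC (bstar x a)) (m₁ m₂ : ℤ) {u₁ u₂ : A}
    (h1 : IsC u₁) (h2 : IsC u₂) :
    (m₁ • a + u₁) * (m₂ • a + u₂) =
      (m₁ + m₂) • a + ((m₁ * m₂) • bstar a a + u₁ + u₂) := by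
  rw [mul_eq_bstar, cr1 hC m₁ h1, cr2 m₂ h2]
  module

lemma Bset_isIdeal (hC : ∀ x : A, IsC (bstar a x) ∧ IsC (bstar x a)) :
    IsIdeal (Bset a) := by
  have hd : IsC (bstar a a) := (hC a).1
  constructor
  · exact Set.subset_univ _
  · constructor
    · exact ⟨0, 0, IsC_zero, by simp⟩
    · rintro z₁ z₂ ⟨m₁, u₁, h1, rfl⟩ ⟨m₂, u₂, h2, rfl⟩
      exact ⟨m₁ + m₂, u₁ + u₂, h1.add h2, by module⟩
    · rintro z ⟨m, u, h1, rfl⟩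
      exact ⟨-m, -u, h1.neg, by module⟩
    · rintro z₁ z₂ ⟨m₁, u₁, h1, rfl⟩ ⟨m₂, u₂, h2, rfl⟩
      exact ⟨m₁ + m₂, (m₁ * m₂) • bstar a a + u₁ + u₂,
        ((hd.zsmul _).add h1).add h2, mul_rep hC m₁ m₂ h1 h2⟩
    · rintro z ⟨m, u, h1, rfl⟩
      obtain ⟨k, hk⟩ := cr3 hC m h1
      refine ⟨-m, k • bstar a a - u, ?_, hk⟩
      rw [sub_eq_add_neg]
      exact (hd.zsmul k).add h1.neg
  · exact isSubbrace_univ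
  · rintro x - z ⟨m, u, h1, rfl⟩
    exact ⟨0, m • bstar x a, ((hC x).2).zsmul m, by rw [cr2 m h1, zero_zsmul, zero_add]⟩
  · rintro x - z ⟨m, u, h1, rfl⟩
    exact ⟨0, m • bstar a x, ((hC x).1).zsmul m, by rw [cr1 hC m h1, zero_zsmul, zero_add]⟩

lemma Iset_isIdealIn (hC : ∀ x : A, IsC (bstar a x) ∧ IsC (bstar x a)) :
    IsIdealIn (Iset a) (Bset a) := by
  have hd : IsC (bstar a a) := (hC a).1
  constructor
  · rintro z ⟨m, n, rfl⟩
    exact ⟨m, n • bstar a a, hd.zsmul n, rfl⟩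
  · constructor
    · exact ⟨0, 0, by simp⟩
    · rintro z₁ z₂ ⟨m₁, n₁, rfl⟩ ⟨m₂, n₂, rfl⟩
      exact ⟨m₁ + m₂, n₁ + n₂, by module⟩
    · rintro z ⟨m, n, rfl⟩
      exact ⟨-m, -n, by module⟩
    · rintro z₁ z₂ ⟨m₁, n₁, rfl⟩ ⟨m₂, n₂, rfl⟩
      refine ⟨m₁ + m₂, m₁ * m₂ + n₁ + n₂, ?_⟩
      rw [mul_rep hC m₁ m₂ (hd.zsmul n₁) (hd.zsmul n₂)]
      module
    · rintro z ⟨m, n, rfl⟩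
      obtain ⟨k, hk⟩ := cr3 hC m (hd.zsmul n)
      exact ⟨-m, k - n, by rw [hk]; module⟩
  · exact (Bset_isIdeal hC).subbrace
  · rintro b ⟨mb, ub, hub, rfl⟩ z ⟨m, n, rfl⟩
    refine ⟨0, m * mb, ?_⟩
    rw [cr2 m (hd.zsmul n), cr1 hC mb hub]
    module
  · rintro b ⟨mb, ub, hub, rfl⟩ z ⟨m, n, rfl⟩
    refine ⟨0, m * mb, ?_⟩
    rw [cr1 hC m (hd.zsmul n), cr2 mb hub]
    module

end Ideals

section Extract
variable {A : Type u} [LeftBrace A] {a : A}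

lemma mem_zeta1_isC {z : A} (h : z ∈ zetaNat A 1) : IsC z :=
  fun y => ⟨(h y).1, (h y).2⟩

lemma zeta2_hC (ha : a ∈ zetaNat A 2) :
    ∀ x : A, IsC (bstar a x) ∧ IsC (bstar x a) :=
  fun x => ⟨mem_zeta1_isC (ha x).1, mem_zeta1_isC (ha x).2⟩

lemma extract (hC : ∀ x : A, IsC (bstar a x) ∧ IsC (bstar x a))
    (hord : ¬ IsOfFinAddOrder a) {w : A} (hw : IsC w)
    (hw0 : ∀ m : ℤ, IsC (m • a) → m • w = 0)
    (hmem : w ∈ Iset a) : w ∈ AddSubgroup.zmultiples (bstar a a) := by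
  have hd : IsC (bstar a a) := (hC a).1
  obtain ⟨m, n, hrep⟩ := hmem
  rcases eq_or_ne m 0 with hm | hm
  · subst hm
    rw [zero_zsmul, zero_add] at hrep
    exact AddSubgroup.mem_zmultiples_iff.mpr ⟨n, hrep.symm⟩
  · exfalso
    apply hord
    have hma : IsC (m • a) := by
      have h1 : m • a = w + (-n) • bstar a a := by rw [hrep]; module
      rw [h1]
      exact hw.add (hd.zsmul (-n))
    have hmd : m • bstar a a = 0 := by
      have h0 := (hma a).2
      rwa [bstar_zsmul] at h0
    have hmw : m • w = 0 := hw0 m hma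
    have h2 : (m * m) • a = 0 := by
      have h3 : m • w = (m * m) • a + n • (m • bstar a a) := by rw [hrep]; module
      rw [hmw, hmd, smul_zero, add_zero] at h3
      exact h3.symm
    have hpos : 0 < m * m := mul_self_pos.mpr hm
    refine isOfFinAddOrder_iff_nsmul_eq_zero.mpr ⟨(m * m).toNat, by omega, ?_⟩
    calc ((m * m).toNat : ℕ) • a = (((m * m).toNat : ℤ)) • a := (natCast_zsmul a _).symm
      _ = (m * m) • a := by rw [Int.toNat_of_nonneg hpos.le]
      _ = 0 := h2

end Extract

end LeftBrace

open LeftBrace in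
/-- **Lemma.** Let `A` be a T-brace and `a ∈ ζ₂(⋆,A)` of infinite additive order.
Then `x ⋆ a, a ⋆ x ∈ ⟨a ⋆ a⟩` for all `x ∈ A`. -/
theorem bstar_mem_zmultiples_of_infinite_order
    {A : Type u} [LeftBrace A] (hT : IsTBrace A) (a : A) (ha : a ∈ zetaNat A 2)
    (hord : ¬ IsOfFinAddOrder a) :
    ∀ x : A, bstar x a ∈ AddSubgroup.zmultiples (bstar a a) ∧
      bstar a x ∈ AddSubgroup.zmultiples (bstar a a) := by
  have hC : ∀ x : A, IsC (bstar a x) ∧ IsC (bstar x a) := zeta2_hC ha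
  have hIdeal : IsIdeal (Iset a) := hT _ _ (Iset_isIdealIn hC) (Bset_isIdeal hC)
  have haI : a ∈ Iset a := ⟨1, 0, by module⟩
  intro x
  constructor
  · refine extract hC hord (hC x).2 (fun m hma => ?_)
      (hIdeal.star_mem_left x trivial a haI)
    have h0 := (hma x).2
    rwa [bstar_zsmul] at h0
  · refine extract hC hord (hC x).1 (fun m hma => ?_)
      (hIdeal.star_mem_right x trivial a haI)
    have h0 := (hma x).1
    rwa [bstar_smul_left hC] at h0
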